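/- Let d₁, d₂, d₃ ∈ ℝ³ be mutually orthonormal (dᵢ·dⱼ = δᵢⱼ) and let q = (φ₀, d₁, d₂, d₃) ∈ ℝ¹² for any φ₀ ∈ ℝ³. Let G(q) be the 6×12 matrix whose block rows (each block of size 3) are [0, d₁ᵀ, 0, 0], [0, 0, d₂ᵀ, 0], [0, 0, 0, d₃ᵀ], [0, 0, d₃ᵀ, d₂ᵀ], [0, d₃ᵀ, 0, d₁ᵀ], [0, d₂ᵀ, d₁ᵀ, 0], and let N(q) be the 12×6 matrix whose transpose has block rows [I, 0, 0, 0] and [0, d̂₁, d̂₂, d̂₃], where d̂ x = d × x. Then N(q) has rank 6 and the column space of N(q) equals the kernel of G(q); in particular dim ker G(q) = 6. -/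

import Mathlib

open Matrix

/-- The skew (hat) matrix of a 3-vector: `hat3 a *ᵥ x = a ×₃ x`. -/
def hat3 (a : Fin 3 → ℝ) : Matrix (Fin 3) (Fin 3) ℝ :=
  !![0, -a 2, a 1; a 2, 0, -a 0; -a 1, a 0, 0]

/-- The zero 3-vector (as a row block). -/
def z3 : Fin 3 → ℝ := fun _ => 0

/-- The Jacobian matrix `G(q)` of the orthonormality constraint of the
geometrically exact beam. -/
def beamG (d₁ d₂ d₃ : Fin 3 → ℝ) : Matrix (Fin 6) (Fin 4 × Fin 3) ℝ :=
  Matrix.of fun r p =>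
    ![![z3, d₁, z3, z3],
      ![z3, z3, d₂, z3],
      ![z3, z3, z3, d₃],
      ![z3, z3, d₃, d₂],
      ![z3, d₃, z3, d₁],
      ![z3, d₂, d₁, z3]] r p.1 p.2

/-- The transpose of the nodal null-space matrix `N(q)`, with block rows
`[I, 0, 0, 0]` and `[0, d̂₁, d̂₂, d̂₃]`. -/
def beamNT (d₁ d₂ d₃ : Fin 3 → ℝ) : Matrix (Fin 6) (Fin 4 × Fin 3) ℝ :=
  Matrix.of fun c p =>
    ![![(1 : Matrix (Fin 3) (Fin 3) ℝ) 0, z3, z3, z3],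
      ![(1 : Matrix (Fin 3) (Fin 3) ℝ) 1, z3, z3, z3],
      ![(1 : Matrix (Fin 3) (Fin 3) ℝ) 2, z3, z3, z3],
      ![z3, hat3 d₁ 0, hat3 d₂ 0, hat3 d₃ 0],
      ![z3, hat3 d₁ 1, hat3 d₂ 1, hat3 d₃ 1],
      ![z3, hat3 d₁ 2, hat3 d₂ 2, hat3 d₃ 2]] c p.1 p.2

/-- The nodal null-space matrix `N(q)` of the geometrically exact beam. -/
def beamN (d₁ d₂ d₃ : Fin 3 → ℝ) : Matrix (Fin 4 × Fin 3) (Fin 6) ℝ :=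
  (beamNT d₁ d₂ d₃)ᵀ

/-! ### Auxiliary lemmas -/

/-- The common diagonal Gram matrix `diag(1,1,1,2,2,2)`. -/
def beamD : Matrix (Fin 6) (Fin 6) ℝ := Matrix.diagonal ![1, 1, 1, 2, 2, 2]

/-- Its inverse. -/
noncomputable def beamDinv : Matrix (Fin 6) (Fin 6) ℝ :=
  Matrix.diagonal ![1, 1, 1, (2 : ℝ)⁻¹, (2 : ℝ)⁻¹, (2 : ℝ)⁻¹]

lemma beamD_mul_beamDinv : beamD * beamDinv = 1 := by
  rw [beamD, beamDinv, Matrix.diagonal_mul_diagonal]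
  ext i j
  fin_cases i <;> fin_cases j <;>
    norm_num [Matrix.diagonal_apply, Matrix.one_apply, Fin.ext_iff]

lemma beamDinv_mul_beamD : beamDinv * beamD = 1 := by
  rw [beamD, beamDinv, Matrix.diagonal_mul_diagonal]
  ext i j
  fin_cases i <;> fin_cases j <;>
    norm_num [Matrix.diagonal_apply, Matrix.one_apply, Fin.ext_iff]

lemma beam_mul_apply (A B : Matrix (Fin 6) (Fin 4 × Fin 3) ℝ) (i j : Fin 6) :
    (A * Bᵀ) i j = ∑ a : Fin 4, ∑ b : Fin 3, A i (a, b) * B j (a, b) := by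
  simp [Matrix.mul_apply, Fintype.sum_prod_type]

set_option maxHeartbeats 2000000 in
/-- `G(q) N(q) = 0` (this is an identity, no orthonormality needed). -/
lemma beamG_mul_beamN (d₁ d₂ d₃ : Fin 3 → ℝ) :
    beamG d₁ d₂ d₃ * beamN d₁ d₂ d₃ = 0 := by
  ext i j
  rw [beamN, beam_mul_apply]
  fin_cases i <;> fin_cases j <;>
    · simp only [beamG, beamNT, hat3, z3, Fin.sum_univ_four, Fin.sum_univ_three,
        Matrix.of_apply, Matrix.cons_val', Matrix.cons_val, Matrix.cons_val_zero, Matrix.cons_val_one,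
        Matrix.head_cons, Matrix.head_fin_const, Matrix.cons_val_fin_one, Matrix.empty_val',
        Matrix.cons_val_succ, Matrix.one_apply, Fin.isValue, Matrix.zero_apply,
        Matrix.vecHead, Matrix.vecTail, Function.comp]
      norm_num [Matrix.vecHead, Matrix.vecTail]
      try ring

/-- Orthonormal rows of a 3×3 matrix give orthonormal columns. -/
lemma col_orthonormal {d₁ d₂ d₃ : Fin 3 → ℝ}
    (h11 : d₁ ⬝ᵥ d₁ = 1) (h22 : d₂ ⬝ᵥ d₂ = 1) (h33 : d₃ ⬝ᵥ d₃ = 1)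
    (h12 : d₁ ⬝ᵥ d₂ = 0) (h13 : d₁ ⬝ᵥ d₃ = 0) (h23 : d₂ ⬝ᵥ d₃ = 0)
    (j k : Fin 3) :
    d₁ j * d₁ k + d₂ j * d₂ k + d₃ j * d₃ k = if j = k then 1 else 0 := by
  have e11 := h11; have e22 := h22; have e33 := h33
  have e12 := h12; have e13 := h13; have e23 := h23
  simp only [dotProduct, Fin.sum_univ_three] at e11 e22 e33 e12 e13 e23
  have hR : (Matrix.of ![d₁, d₂, d₃]) * (Matrix.of ![d₁, d₂, d₃])ᵀ = 1 := by
    ext a b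
    simp only [Matrix.mul_apply, Fin.sum_univ_three, Matrix.transpose_apply,
      Matrix.of_apply]
    fin_cases a <;> fin_cases b <;>
      · simp only [Matrix.cons_val_zero, Matrix.cons_val_one, Matrix.head_cons,
          Matrix.cons_val_succ, Matrix.one_apply, Fin.isValue]
        norm_num [Fin.ext_iff]
        try linarith
  have hRT := mul_eq_one_comm.mp hR
  have h := congrFun (congrFun hRT j) k
  simp only [Matrix.mul_apply, Fin.sum_univ_three, Matrix.transpose_apply,
    Matrix.of_apply, Matrix.cons_val, Matrix.cons_val_zero, Matrix.cons_val_one, Matrix.head_cons,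
    Matrix.cons_val_succ, Matrix.one_apply] at h
  convert h using 2 <;> ring

set_option maxHeartbeats 2000000 in
/-- `N(q)ᵀ N(q) = diag(1,1,1,2,2,2)`. -/
lemma beamNT_mul_beamN (d₁ d₂ d₃ : Fin 3 → ℝ)
    (hc : ∀ j k, d₁ j * d₁ k + d₂ j * d₂ k + d₃ j * d₃ k = if j = k then 1 else 0) :
    beamNT d₁ d₂ d₃ * beamN d₁ d₂ d₃ = beamD := by
  have c00 := hc 0 0; have c11 := hc 1 1; have c22 := hc 2 2
  have c01 := hc 0 1; have c02 := hc 0 2; have c12 := hc 1 2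
  norm_num [Fin.ext_iff] at c00 c11 c22 c01 c02 c12
  ext i j
  rw [beamN, beam_mul_apply]
  fin_cases i <;> fin_cases j <;>
    · simp only [beamNT, hat3, z3, beamD, Fin.sum_univ_four, Fin.sum_univ_three,
        Matrix.of_apply, Matrix.cons_val', Matrix.cons_val, Matrix.cons_val_zero, Matrix.cons_val_one,
        Matrix.head_cons, Matrix.head_fin_const, Matrix.cons_val_fin_one, Matrix.empty_val',
        Matrix.cons_val_succ, Matrix.one_apply, Fin.isValue,
        Matrix.diagonal_apply, Matrix.vecHead, Matrix.vecTail, Function.comp]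
      norm_num [Matrix.vecHead, Matrix.vecTail, Fin.ext_iff]
      try linarith

set_option maxHeartbeats 2000000 in
/-- `G(q) G(q)ᵀ = diag(1,1,1,2,2,2)`. -/
lemma beamG_mul_beamGT (d₁ d₂ d₃ : Fin 3 → ℝ)
    (h11 : d₁ ⬝ᵥ d₁ = 1) (h22 : d₂ ⬝ᵥ d₂ = 1) (h33 : d₃ ⬝ᵥ d₃ = 1)
    (h12 : d₁ ⬝ᵥ d₂ = 0) (h13 : d₁ ⬝ᵥ d₃ = 0) (h23 : d₂ ⬝ᵥ d₃ = 0) :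
    beamG d₁ d₂ d₃ * (beamG d₁ d₂ d₃)ᵀ = beamD := by
  have e11 := h11; have e22 := h22; have e33 := h33
  have e12 := h12; have e13 := h13; have e23 := h23
  simp only [dotProduct, Fin.sum_univ_three] at e11 e22 e33 e12 e13 e23
  ext i j
  rw [beam_mul_apply]
  fin_cases i <;> fin_cases j <;>
    · simp only [beamG, z3, beamD, Fin.sum_univ_four, Fin.sum_univ_three,
        Matrix.of_apply, Matrix.cons_val', Matrix.cons_val, Matrix.cons_val_zero, Matrix.cons_val_one,
        Matrix.head_cons, Matrix.head_fin_const, Matrix.cons_val_fin_one, Matrix.empty_val',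
        Matrix.cons_val_succ, Fin.isValue,
        Matrix.diagonal_apply, Matrix.vecHead, Matrix.vecTail, Function.comp]
      norm_num [Matrix.vecHead, Matrix.vecTail, Fin.ext_iff]
      try linarith

/-- For mutually orthonormal directors, the nodal null-space matrix `N(q)`
has rank 6 and its column space equals the kernel of the constraint Jacobian
`G(q)`; in particular `dim ker G(q) = 6`. -/
theorem beamN_nullspace_basis (φ₀ d₁ d₂ d₃ : Fin 3 → ℝ)
    (h11 : d₁ ⬝ᵥ d₁ = 1) (h22 : d₂ ⬝ᵥ d₂ = 1) (h33 : d₃ ⬝ᵥ d₃ = 1)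
    (h12 : d₁ ⬝ᵥ d₂ = 0) (h13 : d₁ ⬝ᵥ d₃ = 0) (h23 : d₂ ⬝ᵥ d₃ = 0) :
    (beamN d₁ d₂ d₃).rank = 6 ∧
      LinearMap.range (beamN d₁ d₂ d₃).mulVecLin =
        LinearMap.ker (beamG d₁ d₂ d₃).mulVecLin ∧
      Module.finrank ℝ (LinearMap.ker (beamG d₁ d₂ d₃).mulVecLin) = 6 := by
  set N := beamN d₁ d₂ d₃ with hN
  set G := beamG d₁ d₂ d₃ with hG
  have hc := col_orthonormal h11 h22 h33 h12 h13 h23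
  have hGN : G * N = 0 := beamG_mul_beamN d₁ d₂ d₃
  have hNTN : beamNT d₁ d₂ d₃ * N = beamD := beamNT_mul_beamN d₁ d₂ d₃ hc
  have hGGT : G * Gᵀ = beamD := beamG_mul_beamGT d₁ d₂ d₃ h11 h22 h33 h12 h13 h23
  -- N has a left inverse, hence `mulVecLin N` is injective
  have hleft : (beamDinv * beamNT d₁ d₂ d₃) * N = 1 := by
    rw [Matrix.mul_assoc, hNTN, beamDinv_mul_beamD]
  have hNinj : Function.Injective N.mulVecLin := by
    intro x y hxy
    have hx : (beamDinv * beamNT d₁ d₂ d₃) *ᵥ (N *ᵥ x) =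
        (beamDinv * beamNT d₁ d₂ d₃) *ᵥ (N *ᵥ y) := by
      simpa [Matrix.mulVecLin_apply] using congrArg ((beamDinv * beamNT d₁ d₂ d₃) *ᵥ ·) hxy
    simpa [Matrix.mulVec_mulVec, hleft, Matrix.one_mulVec] using hx
  -- hence `rank N = 6`
  have hrankN : N.rank = 6 := by
    have : N.rank = Module.finrank ℝ (LinearMap.range N.mulVecLin) := rfl
    rw [this, LinearMap.finrank_range_of_inj hNinj, Module.finrank_pi]
    simp
  have hfrangeN : Module.finrank ℝ (LinearMap.range N.mulVecLin) = 6 := by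
    rw [LinearMap.finrank_range_of_inj hNinj, Module.finrank_pi]; simp
  -- G is surjective
  have hright : G * (Gᵀ * beamDinv) = 1 := by
    rw [← Matrix.mul_assoc, hGGT, beamD_mul_beamDinv]
  have hGsurj : Function.Surjective G.mulVecLin := by
    intro y
    refine ⟨(Gᵀ * beamDinv) *ᵥ y, ?_⟩
    simp [Matrix.mulVecLin_apply, Matrix.mulVec_mulVec, hright, Matrix.one_mulVec]
  -- rank–nullity for G
  have hkerG : Module.finrank ℝ (LinearMap.ker G.mulVecLin) = 6 := by
    have hrn := LinearMap.finrank_range_add_finrank_ker G.mulVecLin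
    have hr : Module.finrank ℝ (LinearMap.range G.mulVecLin) = 6 := by
      rw [LinearMap.range_eq_top.mpr hGsurj, finrank_top, Module.finrank_pi]; simp
    have hd : Module.finrank ℝ ((Fin 4 × Fin 3) → ℝ) = 12 := by
      rw [Module.finrank_pi]; simp
    omega
  -- range N ⊆ ker G
  have hle : LinearMap.range N.mulVecLin ≤ LinearMap.ker G.mulVecLin := by
    rintro x ⟨v, rfl⟩
    have : G.mulVecLin (N.mulVecLin v) = (G * N).mulVecLin v := by
      rw [Matrix.mulVecLin_mul]; rfl
    simp [LinearMap.mem_ker, this, hGN]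
  have heq : LinearMap.range N.mulVecLin = LinearMap.ker G.mulVecLin :=
    Submodule.eq_of_le_of_finrank_le hle (by rw [hkerG, hfrangeN])
  exact ⟨hrankN, heq, hkerG⟩
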